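/- Let G = (L ∪ R, E) be a (c,d,α,δ)-bipartite expander with |L| = n. Then for any subset S ⊆ L with |S| ≤ αn and any integer t ≥ 0, the number of right vertices adjacent to at most t vertices of S satisfies |N_{≤t}(S)| ≥ ((δ(t+1) − 1)/t) · c|S| (for t ≥ 1). -/
import Mathlib


open Finset
open scoped Classical

/-- For a `(c,d,α,δ)`-bipartite expander with left part `Fin n`,
any `S ⊆ L` with `|S| ≤ αn` and any `t ≥ 1` satisfies
`|N_{≤t}(S)| ≥ ((δ(t+1) − 1)/t) · c|S|`. -/
theorem stmt0 (n c d t : ℕ) (α δ : ℝ) (R : Type*) [Fintype R]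
    (Adj : Fin n → R → Prop)
    (hleft : ∀ u : Fin n, (Finset.univ.filter (fun v : R => Adj u v)).card = c)
    (hright : ∀ v : R, (Finset.univ.filter (fun u : Fin n => Adj u v)).card = d)
    (hexp : ∀ S : Finset (Fin n), (S.card : ℝ) ≤ α * n →
      δ * c * S.card ≤ ((Finset.univ.filter (fun v : R => ∃ u ∈ S, Adj u v)).card : ℝ))
    (ht : 1 ≤ t)
    (S : Finset (Fin n)) (hS : (S.card : ℝ) ≤ α * n) :
    (δ * (t + 1) - 1) / t * (c * S.card) ≤
      ((Finset.univ.filter (fun v : R =>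
        0 < (S.filter (fun u => Adj u v)).card ∧ (S.filter (fun u => Adj u v)).card ≤ t)).card : ℝ) := by
  set deg : R → ℕ := fun v => (S.filter (fun u => Adj u v)).card with hdeg
  set A : Finset R := Finset.univ.filter (fun v : R => 0 < deg v ∧ deg v ≤ t) with hA
  set B : Finset R := Finset.univ.filter (fun v : R => t < deg v) with hB
  set N : Finset R := Finset.univ.filter (fun v : R => ∃ u ∈ S, Adj u v) with hN
  -- total edge count
  have hedge : ∑ v : R, deg v = c * S.card := by
    have : ∑ v : R, deg v = ∑ u ∈ S, (Finset.univ.filter (fun v : R => Adj u v)).card := by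
      simp only [hdeg, Finset.card_filter]
      rw [Finset.sum_comm]
    rw [this]
    simp [hleft, mul_comm]
  -- N = A ∪ B
  have hNeq : N = A ∪ B := by
    ext v
    simp only [hN, hA, hB, Finset.mem_union, Finset.mem_filter, Finset.mem_univ, true_and]
    constructor
    · rintro ⟨u, hu, hadj⟩
      have hpos : 0 < deg v := Finset.card_pos.2 ⟨u, by simp [hdeg, hu, hadj]⟩
      rcases le_or_gt (deg v) t with h | h
      · exact Or.inl ⟨hpos, h⟩
      · exact Or.inr h
    · rintro (⟨hpos, _⟩ | hlt)
      · obtain ⟨u, hu⟩ := Finset.card_pos.1 hpos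
        simp only [hdeg, Finset.mem_filter] at hu
        exact ⟨u, hu.1, hu.2⟩
      · have hpos : 0 < deg v := lt_of_lt_of_le (Nat.lt_of_lt_of_le (Nat.zero_lt_of_lt (Nat.lt_of_lt_of_le Nat.zero_lt_one ht)) (le_of_lt hlt)) le_rfl
        obtain ⟨u, hu⟩ := Finset.card_pos.1 hpos
        simp only [hdeg, Finset.mem_filter] at hu
        exact ⟨u, hu.1, hu.2⟩
  have hdisj : Disjoint A B := by
    rw [Finset.disjoint_left]
    intro v hv hv'
    simp only [hA, hB, Finset.mem_filter] at hv hv'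
    omega
  have hNcard : N.card = A.card + B.card := by
    rw [hNeq, Finset.card_union_of_disjoint hdisj]
  -- lower bound on edges
  have hlb : A.card + (t + 1) * B.card ≤ c * S.card := by
    rw [← hedge]
    calc A.card + (t + 1) * B.card
        = ∑ v ∈ A, 1 + ∑ v ∈ B, (t + 1) := by
          simp [mul_comm]
      _ ≤ ∑ v ∈ A, deg v + ∑ v ∈ B, deg v := by
          gcongr with v hv v hv
          · simp only [hA, Finset.mem_filter] at hv; exact hv.2.1
          · simp only [hB, Finset.mem_filter] at hv; omega
      _ = ∑ v ∈ A ∪ B, deg v := (Finset.sum_union hdisj).symm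
      _ ≤ ∑ v : R, deg v := Finset.sum_le_sum_of_subset (Finset.subset_univ _)
  -- key nat inequality
  have hkey : (t + 1) * N.card ≤ t * A.card + c * S.card := by
    have : (t + 1) * N.card = (t + 1) * A.card + (t + 1) * B.card := by
      rw [hNcard]; ring
    have h2 : (t + 1) * A.card = t * A.card + A.card := by ring
    omega
  -- pass to reals
  have hexpS := hexp S hS
  have htR : (0 : ℝ) < t := by exact_mod_cast Nat.lt_of_lt_of_le Nat.zero_lt_one ht
  have hkeyR : ((t : ℝ) + 1) * N.card ≤ t * A.card + c * S.card := by
    exact_mod_cast hkey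
  rw [div_mul_eq_mul_div, div_le_iff₀ htR]
  have : δ * c * S.card * (t + 1) ≤ ((t : ℝ) + 1) * N.card := by
    have h1 : (0 : ℝ) ≤ (t : ℝ) + 1 := by positivity
    nlinarith [hexpS]
  nlinarith [this, hkeyR]
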